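/- For t ∈ ℝ let a_t denote the 2×2 complex matrix diag(e^{t/2}, e^{−t/2}), and let R denote the 2×2 complex matrix with entries R₁₁ = R₂₂ = cos(π/3) = 1/2 and R₁₂ = R₂₁ = −i·sin(π/3) = −i√3/2 (the rotation element R_{2π/3} of SU(2)). For r > 0 set g_r = a_{−r/4} · R · a_{r/4}. Then there exists a constant C > 0 such that for every r > 0, the Cartan radial component ℓ(r) of g_r, which equals 2·log‖g_r‖ where ‖·‖ is the operator norm on ℂ² with the Euclidean norm, satisfies |ℓ(r) − r/2 + log(4/3)| ≤ C·e^{−r/4}. -/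

import Mathlib

open scoped Matrix.Norms.L2Operator

set_option maxHeartbeats 1000000

/-- The diagonal matrix `a_t = diag(e^{t/2}, e^{-t/2})`. -/
noncomputable def aFlow (t : ℝ) : Matrix (Fin 2) (Fin 2) ℂ :=
  !![Complex.exp (t / 2), 0; 0, Complex.exp (-t / 2)]

/-- The rotation element `R_{2π/3} ∈ SU(2)`, with entries
`R₁₁ = R₂₂ = cos(π/3) = 1/2` and `R₁₂ = R₂₁ = -i sin(π/3) = -i√3/2`. -/
noncomputable def Rrot : Matrix (Fin 2) (Fin 2) ℂ :=
  !![(1 / 2 : ℂ), -Complex.I * (Real.sqrt 3 / 2);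
     -Complex.I * (Real.sqrt 3 / 2), (1 / 2 : ℂ)]

open Matrix in
private lemma cs2' (a b x y : ℂ) : ‖a*x + b*y‖^2 ≤ (‖a‖^2+‖b‖^2)*(‖x‖^2+‖y‖^2) := by
  have h1 : ‖a*x + b*y‖ ≤ ‖a‖*‖x‖ + ‖b‖*‖y‖ := by
    calc ‖a*x + b*y‖ ≤ ‖a*x‖ + ‖b*y‖ := norm_add_le _ _
    _ = ‖a‖*‖x‖ + ‖b‖*‖y‖ := by rw [norm_mul, norm_mul]
  nlinarith [sq_nonneg (‖a‖*‖y‖ - ‖b‖*‖x‖), norm_nonneg (a*x+b*y), norm_nonneg a,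
    norm_nonneg b, norm_nonneg x, norm_nonneg y, mul_nonneg (norm_nonneg a) (norm_nonneg x),
    mul_nonneg (norm_nonneg b) (norm_nonneg y)]

open Matrix in
private lemma upper_bd' (a b c d : ℂ) :
    ‖!![a,b;c,d]‖ ≤ Real.sqrt (‖a‖^2+‖b‖^2+‖c‖^2+‖d‖^2) := by
  rw [Matrix.l2_opNorm_def]
  apply ContinuousLinearMap.opNorm_le_bound _ (Real.sqrt_nonneg _)
  intro x
  rw [← Real.sqrt_sq (norm_nonneg x), ← Real.sqrt_mul (by positivity)]
  have hx : ‖x‖^2 = ‖x 0‖^2 + ‖x 1‖^2 := by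
    rw [EuclideanSpace.norm_eq, Real.sq_sqrt (by positivity)]
    simp [Fin.sum_univ_two]
  rw [hx]
  have key : ∀ y : EuclideanSpace ℂ (Fin 2),
      ‖y‖ = Real.sqrt (‖y 0‖^2 + ‖y 1‖^2) := by
    intro y
    rw [EuclideanSpace.norm_eq]
    congr 1
    simp [Fin.sum_univ_two]
  rw [show ((Matrix.toEuclideanLin.trans LinearMap.toContinuousLinearMap) !![a,b;c,d] x)
      = Matrix.toEuclideanLin !![a,b;c,d] x from rfl]
  rw [key, Matrix.toEuclideanLin_apply]
  apply Real.sqrt_le_sqrt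
  have e0 : ((WithLp.toLp 2 (!![a,b;c,d] *ᵥ WithLp.ofLp x)) : EuclideanSpace ℂ (Fin 2)) 0
      = a * x 0 + b * x 1 := by
    simp [Matrix.mulVec, dotProduct, Fin.sum_univ_two]
  have e1 : ((WithLp.toLp 2 (!![a,b;c,d] *ᵥ WithLp.ofLp x)) : EuclideanSpace ℂ (Fin 2)) 1
      = c * x 0 + d * x 1 := by
    simp [Matrix.mulVec, dotProduct, Fin.sum_univ_two]
  rw [e0, e1]
  nlinarith [cs2' a b (x 0) (x 1), cs2' c d (x 0) (x 1), sq_nonneg (‖x 0‖), sq_nonneg (‖x 1‖),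
    sq_nonneg ‖a‖, sq_nonneg ‖b‖, sq_nonneg ‖c‖, sq_nonneg ‖d‖]

open Matrix in
private lemma lower_bd' (a b c d : ℂ) :
    Real.sqrt (‖a‖^2+‖c‖^2) ≤ ‖!![a,b;c,d]‖ := by
  have h := Matrix.l2_opNorm_mulVec !![a,b;c,d] ((WithLp.equiv 2 (Fin 2 → ℂ)).symm ![1,0])
  have hx : ‖((WithLp.equiv 2 (Fin 2 → ℂ)).symm ![1,0] : EuclideanSpace ℂ (Fin 2))‖ = 1 := by
    rw [EuclideanSpace.norm_eq]
    simp [Fin.sum_univ_two]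
  rw [hx, mul_one] at h
  refine le_trans (le_of_eq ?_) h
  rw [EuclideanSpace.norm_eq]
  congr 1
  simp [Fin.sum_univ_two, Matrix.mulVec, dotProduct]

private lemma gr_eq (r : ℝ) : aFlow (-r / 4) * Rrot * aFlow (r / 4) =
    !![(1/2 : ℂ), -Complex.I * ((Real.sqrt 3 : ℂ) / 2) * Complex.exp ((-(r/4) : ℝ) : ℂ);
       -Complex.I * ((Real.sqrt 3 : ℂ) / 2) * Complex.exp (((r/4) : ℝ) : ℂ), (1/2 : ℂ)] := by
  simp [aFlow, Rrot, Matrix.mul_fin_two]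
  norm_num
  ring_nf
  simp only [sq, ← Complex.exp_add]
  norm_num
  ring_nf
  trivial

private lemma norm_entry (x : ℝ) :
    ‖-Complex.I * ((Real.sqrt 3 : ℂ) / 2) * Complex.exp (x : ℂ)‖
      = Real.sqrt 3 / 2 * Real.exp x := by
  simp [map_mul, Complex.norm_exp,
    abs_of_nonneg (Real.sqrt_nonneg 3)]

/-- Estimate (eq:l) of the paper: for `g_r = a_{-r/4} · R_{2π/3} · a_{r/4}`, the Cartan
radial component `ℓ(r) = 2 log ‖g_r‖` (with `‖·‖` the `ℓ²`-operator norm) satisfies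
`|ℓ(r) - r/2 + log(4/3)| ≤ C e^{-r/4}` for a universal constant `C > 0`. -/
theorem cartan_radial_estimate :
    ∃ C : ℝ, 0 < C ∧ ∀ r : ℝ, 0 < r →
      |2 * Real.log ‖aFlow (-r / 4) * Rrot * aFlow (r / 4)‖ - r / 2 + Real.log (4 / 3)|
        ≤ C * Real.exp (-r / 4) := by
  refine ⟨2, by norm_num, fun r hr => ?_⟩
  obtain ⟨s, hs⟩ : ∃ x : ℝ, Real.exp (r/4) = x := ⟨_, rfl⟩
  obtain ⟨t, ht⟩ : ∃ x : ℝ, Real.exp (-(r/4)) = x := ⟨_, rfl⟩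
  have hspos : 0 < s := hs ▸ Real.exp_pos _
  have htpos : 0 < t := ht ▸ Real.exp_pos _
  have hs1 : 1 ≤ s := by
    rw [← hs]
    have := Real.exp_le_exp.mpr (le_of_lt (by linarith : (0:ℝ) < r/4))
    simpa using this
  have ht1 : t ≤ 1 := by
    rw [← ht]
    calc Real.exp (-(r/4)) ≤ Real.exp 0 := Real.exp_le_exp.mpr (by linarith)
    _ = 1 := Real.exp_zero
  have hts : t * s = 1 := by
    rw [← ht, ← hs, ← Real.exp_add]; simp
  -- norms of the entries
  have hn12 : ‖(1/2 : ℂ)‖ = 1/2 := by norm_num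
  have hns : ‖-Complex.I * ((Real.sqrt 3 : ℂ) / 2) * Complex.exp ((r/4 : ℝ) : ℂ)‖
      = Real.sqrt 3 / 2 * s := by rw [norm_entry (r/4), hs]
  have hnt : ‖-Complex.I * ((Real.sqrt 3 : ℂ) / 2) * Complex.exp ((-(r/4) : ℝ) : ℂ)‖
      = Real.sqrt 3 / 2 * t := by rw [norm_entry (-(r/4)), ht]
  have hsq3 : (Real.sqrt 3)^2 = 3 := Real.sq_sqrt (by norm_num)
  have hBpos : (0:ℝ) < Real.sqrt 3 / 2 * s := by
    have h3 : (0:ℝ) < Real.sqrt 3 := Real.sqrt_pos.mpr (by norm_num)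
    nlinarith
  -- lower bound : (√3/2) s ≤ L
  have hlow : Real.sqrt 3 / 2 * s ≤ ‖aFlow (-r / 4) * Rrot * aFlow (r / 4)‖ := by
    rw [gr_eq]
    have h := lower_bd' (1/2 : ℂ)
      (-Complex.I * ((Real.sqrt 3 : ℂ) / 2) * Complex.exp ((-(r/4) : ℝ) : ℂ))
      (-Complex.I * ((Real.sqrt 3 : ℂ) / 2) * Complex.exp ((r/4 : ℝ) : ℂ)) (1/2 : ℂ)
    rw [hn12, hns] at h
    refine le_trans ?_ h
    exact (Real.le_sqrt' hBpos).mpr (by nlinarith)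
  have hLpos : 0 < ‖aFlow (-r / 4) * Rrot * aFlow (r / 4)‖ := lt_of_lt_of_le hBpos hlow
  -- upper bound
  have hQpos : (0:ℝ) < 1/2 + 3/4 * t^2 + 3/4 * s^2 := by nlinarith
  have hQ : ‖aFlow (-r / 4) * Rrot * aFlow (r / 4)‖
      ≤ Real.sqrt (1/2 + 3/4 * t^2 + 3/4 * s^2) := by
    rw [gr_eq]
    have h := upper_bd' (1/2 : ℂ)
      (-Complex.I * ((Real.sqrt 3 : ℂ) / 2) * Complex.exp ((-(r/4) : ℝ) : ℂ))
      (-Complex.I * ((Real.sqrt 3 : ℂ) / 2) * Complex.exp ((r/4 : ℝ) : ℂ)) (1/2 : ℂ)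
    rw [hn12, hns, hnt] at h
    refine le_trans h (le_of_eq ?_)
    congr 1
    nlinarith
  -- identity: r/2 - log(4/3) = 2 log((√3/2) s)
  have hid : 2 * Real.log (Real.sqrt 3 / 2 * s) = r/2 - Real.log (4/3) := by
    rw [Real.log_mul (by positivity) (ne_of_gt hspos), ← hs,
      Real.log_div (by positivity) (by norm_num),
      Real.log_sqrt (by norm_num), Real.log_exp, Real.log_div (by norm_num) (by norm_num),
      show (4:ℝ) = 2^2 by norm_num, Real.log_pow]
    push_cast
    ring
  have hlogle : Real.log (Real.sqrt 3 / 2 * s)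
      ≤ Real.log ‖aFlow (-r / 4) * Rrot * aFlow (r / 4)‖ := Real.log_le_log hBpos hlow
  have hlogL : Real.log ‖aFlow (-r / 4) * Rrot * aFlow (r / 4)‖
      ≤ (1/2) * Real.log (1/2 + 3/4 * t^2 + 3/4 * s^2) := by
    calc Real.log ‖aFlow (-r / 4) * Rrot * aFlow (r / 4)‖
        ≤ Real.log (Real.sqrt (1/2 + 3/4 * t^2 + 3/4 * s^2)) := Real.log_le_log hLpos hQ
    _ = (1/2) * Real.log (1/2 + 3/4 * t^2 + 3/4 * s^2) := by
        rw [Real.log_sqrt (le_of_lt hQpos)]; ring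
  have hlogB : 2 * Real.log (Real.sqrt 3 / 2 * s) = Real.log (3/4 * s^2) := by
    rw [show (3:ℝ)/4 * s^2 = (Real.sqrt 3 / 2 * s)^2 by rw [mul_pow, div_pow, hsq3]; norm_num,
      Real.log_pow]
    push_cast
    ring
  have hratio : Real.log (1/2 + 3/4 * t^2 + 3/4 * s^2) - Real.log (3/4 * s^2) ≤ 2 * t := by
    have hRpos : (0:ℝ) < 3/4 * s^2 := by nlinarith
    rw [← Real.log_div (ne_of_gt hQpos) (ne_of_gt hRpos)]
    have h1 : Real.log ((1/2 + 3/4 * t^2 + 3/4 * s^2) / (3/4 * s^2))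
        ≤ (1/2 + 3/4 * t^2 + 3/4 * s^2) / (3/4 * s^2) - 1 :=
      Real.log_le_sub_one_of_pos (by positivity)
    have h2 : (1/2 + 3/4 * t^2 + 3/4 * s^2) / (3/4 * s^2) - 1 ≤ 2 * t := by
      rw [div_sub_one (ne_of_gt hRpos), div_le_iff₀ hRpos]
      nlinarith
    linarith
  have habs : 0 ≤ 2 * Real.log ‖aFlow (-r / 4) * Rrot * aFlow (r / 4)‖ - r / 2
      + Real.log (4/3) := by linarith
  rw [abs_of_nonneg habs]
  have hexp : Real.exp (-r/4) = t := by rw [← ht]; congr 1; ring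
  rw [hexp]
  linarith
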